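/- Let n ≥ s ≥ r ≥ 3 be integers and let i be an integer with 0 ≤ i ≤ ⌊n/s⌋. Let H be the complete s-partite graph on n vertices whose vertex classes are one class of size i together with s−1 classes partitioning the remaining n−i vertices, each of size ⌊(n−i)/(s−1)⌋ or ⌈(n−i)/(s−1)⌉. Then k_r(H) ≤ C(s−1, r−1) · ((n−i)/(s−1))^{r−1} · i + C(s−1, r) · ((n−i)/(s−1))^r. -/

import Mathlib

open Finset

private lemma amgm_aux (k : ℕ) (u w : ℝ) (hu : 0 ≤ u) (hw : 0 ≤ w) :
    u ^ k * w ≤ (((k : ℝ) * u + w) / ((k : ℝ) + 1)) ^ (k + 1) := by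
  have hk : (0:ℝ) < (k:ℝ) + 1 := by positivity
  have h1 : (0:ℝ) ≤ (k:ℝ)/((k:ℝ)+1) := by positivity
  have h2 : (0:ℝ) ≤ 1/((k:ℝ)+1) := by positivity
  have hsum : (k:ℝ)/((k:ℝ)+1) + 1/((k:ℝ)+1) = 1 := by field_simp
  have h := Real.geom_mean_le_arith_mean2_weighted h1 h2 hu hw hsum
  have hpow := pow_le_pow_left₀ (by positivity) h (k+1)
  calc u ^ k * w = (u ^ ((k:ℝ)/((k:ℝ)+1)) * w ^ (1/((k:ℝ)+1))) ^ (k + 1) := by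
        rw [mul_pow, ← Real.rpow_natCast (u ^ ((k:ℝ)/((k:ℝ)+1))) (k+1),
          ← Real.rpow_natCast (w ^ (1/((k:ℝ)+1))) (k+1),
          ← Real.rpow_mul hu, ← Real.rpow_mul hw]
        push_cast
        rw [div_mul_cancel₀ _ hk.ne', one_div, inv_mul_cancel₀ hk.ne',
          Real.rpow_natCast, Real.rpow_one]
    _ ≤ ((k:ℝ)/((k:ℝ)+1) * u + 1/((k:ℝ)+1) * w) ^ (k + 1) := hpow
    _ = (((k : ℝ) * u + w) / ((k : ℝ) + 1)) ^ (k + 1) := by ring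

open Finset

private lemma natid (m k : ℕ) :
    k * (m+1).choose (k+1) + m.choose (k+1) = m * m.choose k := by
  rcases le_or_gt k m with h | h
  · obtain ⟨d, rfl⟩ : ∃ d, m = k + d := ⟨m - k, by omega⟩
    have h1 := Nat.choose_succ_right_eq (k + d) k
    have h2 : (k+d+1).choose (k+1) = (k+d).choose k + (k+d).choose (k+1) :=
      Nat.choose_succ_succ _ _
    have h3 : k + d - k = d := by omega
    rw [h3] at h1
    rw [h2]
    nlinarith [h1]
  · rw [Nat.choose_eq_zero_of_lt (by omega : m < k+1),
      Nat.choose_eq_zero_of_lt (by omega : m+1 < k+1),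
      Nat.choose_eq_zero_of_lt h]
    simp

private lemma key_step (m k : ℕ) (u y : ℝ) (hu : 0 ≤ u) (hy : 0 ≤ y) :
    (m.choose (k+1) : ℝ) * u ^ (k+1) + y * (m.choose k : ℝ) * u ^ k ≤
      ((m+1).choose (k+1) : ℝ) * ((y + (m:ℝ) * u) / ((m:ℝ) + 1)) ^ (k+1) := by
  by_cases hC : (m+1).choose (k+1) = 0
  · have h1 : m + 1 < k + 1 := Nat.choose_eq_zero_iff.mp hC
    rw [hC, Nat.choose_eq_zero_of_lt (by omega : m < k + 1),
      Nat.choose_eq_zero_of_lt (by omega : m < k)]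
    simp
  · have hCpos : (0:ℝ) < ((m+1).choose (k+1) : ℝ) := by
      exact_mod_cast Nat.pos_of_ne_zero hC
    have hC0 : ((m+1).choose (k+1) : ℝ) ≠ 0 := hCpos.ne'
    have hm1 : ((m:ℝ)+1) ≠ 0 := by positivity
    have hmul1 : ((m:ℝ)+1) * (m.choose k : ℝ) = ((m+1).choose (k+1) : ℝ) * ((k:ℝ)+1) := by
      exact_mod_cast congrArg (Nat.cast : ℕ → ℝ) (Nat.add_one_mul_choose_eq m k)
    have hmul2 : (k:ℝ) * ((m+1).choose (k+1) : ℝ) + (m.choose (k+1) : ℝ)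
        = (m:ℝ) * (m.choose k : ℝ) := by
      exact_mod_cast congrArg (Nat.cast : ℕ → ℝ) (natid m k)
    have hw : 0 ≤ ((m.choose (k+1) : ℝ) * u + (m.choose k : ℝ) * y) / ((m+1).choose (k+1) : ℝ) := by
      positivity
    have hlin : (k:ℝ) * u +
        ((m.choose (k+1) : ℝ) * u + (m.choose k : ℝ) * y) / ((m+1).choose (k+1) : ℝ)
        = ((k:ℝ)+1) * ((y + (m:ℝ)*u) / ((m:ℝ)+1)) := by
      field_simp
      linear_combination ((m:ℝ)+1) * u * hmul2 + (y + (m:ℝ)*u) * hmul1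
    have amgm := amgm_aux k u _ hu hw
    have hsimp : (((k:ℝ)+1) * ((y + (m:ℝ)*u) / ((m:ℝ)+1))) / ((k:ℝ)+1)
        = (y + (m:ℝ)*u) / ((m:ℝ)+1) := by
      field_simp
    rw [hlin, hsimp] at amgm
    calc (m.choose (k+1) : ℝ) * u ^ (k+1) + y * (m.choose k : ℝ) * u ^ k
        = ((m+1).choose (k+1) : ℝ) * (u ^ k *
            (((m.choose (k+1) : ℝ) * u + (m.choose k : ℝ) * y) / ((m+1).choose (k+1) : ℝ))) := by
          field_simp; ring
      _ ≤ ((m+1).choose (k+1) : ℝ) * ((y + (m:ℝ)*u) / ((m:ℝ)+1)) ^ (k+1) :=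
          mul_le_mul_of_nonneg_left amgm hCpos.le
private lemma maclaurin {ι : Type*} [DecidableEq ι] (c : ι → ℝ) (hc : ∀ j, 0 ≤ c j)
    (A : Finset ι) (k : ℕ) :
    ∑ T ∈ A.powersetCard k, ∏ j ∈ T, c j ≤
      (A.card.choose k : ℝ) * ((∑ j ∈ A, c j) / (A.card : ℝ)) ^ k := by
  induction A using Finset.induction_on generalizing k with
  | empty =>
      cases k with
      | zero => simp
      | succ k =>
          rw [Finset.powersetCard_eq_empty.mpr (by simp)]
          simp
  | @insert y A hy ih =>
      cases k with
      | zero => simp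
      | succ k =>
          have hTy : ∀ T ∈ A.powersetCard k, y ∉ T := by
            intro T hT hyT
            exact hy ((Finset.mem_powersetCard.mp hT).1 hyT)
          have hdisj : Disjoint (A.powersetCard (k+1)) ((A.powersetCard k).image (insert y)) := by
            rw [Finset.disjoint_left]
            intro T hT hT'
            obtain ⟨T', hT', rfl⟩ := Finset.mem_image.mp hT'
            exact hy ((Finset.mem_powersetCard.mp hT).1 (Finset.mem_insert_self y T'))
          have hinj : Set.InjOn (insert y) (A.powersetCard k : Set (Finset ι)) := by
            intro T hT T' hT' hTT
            have h1 := hTy T (by simpa using hT)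
            have h2 := hTy T' (by simpa using hT')
            rw [← Finset.erase_insert h1, ← Finset.erase_insert h2, hTT]
          have hu : 0 ≤ (∑ j ∈ A, c j) / (A.card : ℝ) :=
            div_nonneg (Finset.sum_nonneg fun j _ => hc j) (Nat.cast_nonneg _)
          have hSA : ∑ j ∈ A, c j = (A.card : ℝ) * ((∑ j ∈ A, c j) / (A.card : ℝ)) := by
            rcases Nat.eq_zero_or_pos A.card with h | h
            · rw [Finset.card_eq_zero.mp h]; simp
            · field_simp
          rw [Finset.powersetCard_succ_insert hy, Finset.sum_union hdisj,
            Finset.sum_image hinj, Finset.card_insert_of_notMem hy, Finset.sum_insert hy]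
          have hprod : ∀ T ∈ A.powersetCard k, ∏ j ∈ insert y T, c j = c y * ∏ j ∈ T, c j := by
            intro T hT
            exact Finset.prod_insert (hTy T hT)
          rw [Finset.sum_congr rfl hprod, ← Finset.mul_sum]
          calc (∑ T ∈ A.powersetCard (k+1), ∏ j ∈ T, c j)
                + c y * ∑ T ∈ A.powersetCard k, ∏ j ∈ T, c j
              ≤ (A.card.choose (k+1) : ℝ) * ((∑ j ∈ A, c j) / (A.card : ℝ)) ^ (k+1)
                + c y * ((A.card.choose k : ℝ) * ((∑ j ∈ A, c j) / (A.card : ℝ)) ^ k) :=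
                add_le_add (ih (k+1)) (mul_le_mul_of_nonneg_left (ih k) (hc y))
            _ ≤ ((A.card+1).choose (k+1) : ℝ) *
                ((c y + (A.card : ℝ) * ((∑ j ∈ A, c j) / (A.card : ℝ))) / ((A.card : ℝ) + 1)) ^ (k+1) := by
                have := key_step A.card k ((∑ j ∈ A, c j) / (A.card : ℝ)) (c y) hu (hc y)
                linarith [this]
            _ = ((A.card+1).choose (k+1) : ℝ) *
                ((c y + ∑ j ∈ A, c j) / ((A.card : ℝ) + 1)) ^ (k+1) := by
                rw [← hSA]
            _ = (↑((A.card+1).choose (k+1)) : ℝ) *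
                ((c y + ∑ j ∈ A, c j) / (↑(A.card+1) : ℝ)) ^ (k+1) := by
                push_cast; ring_nf
/-- `k_r(G)`: the number of `r`-cliques of a simple graph `G`. -/
noncomputable def kcliques {V : Type*} (G : SimpleGraph V) (r : ℕ) : ℕ :=
  {t : Finset V | G.IsNClique r t}.ncard

theorem Hi_cliques_upper (n s r i : ℕ) (hr : 3 ≤ r) (hrs : r ≤ s) (hsn : s ≤ n)
    (hi : i ≤ n / s) (H : SimpleGraph (Fin n)) (π : Fin n → Fin s) (j₀ : Fin s)
    (hAdj : ∀ v w, H.Adj v w ↔ π v ≠ π w)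
    (h0 : (Finset.univ.filter fun v => π v = j₀).card = i)
    (hclass : ∀ j : Fin s, j ≠ j₀ →
      (Finset.univ.filter fun v => π v = j).card = (n - i) / (s - 1) ∨
      (Finset.univ.filter fun v => π v = j).card = (n - i + (s - 2)) / (s - 1)) :
    (kcliques H r : ℝ) ≤
      ((s - 1).choose (r - 1) : ℝ) * (((n : ℝ) - (i : ℝ)) / ((s : ℝ) - 1)) ^ (r - 1) * (i : ℝ) +
        ((s - 1).choose r : ℝ) * (((n : ℝ) - (i : ℝ)) / ((s : ℝ) - 1)) ^ r := by
  classical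
  obtain ⟨r', rfl⟩ : ∃ r', r = r' + 1 := ⟨r - 1, by omega⟩
  have hn0 : 0 < n := by omega
  set c : Fin s → ℕ := fun j => (Finset.univ.filter fun v => π v = j).card with hcdef
  set K : Finset (Finset (Fin n)) :=
    Finset.univ.filter (fun t : Finset (Fin n) => H.IsNClique (r'+1) t) with hKdef
  have hkc : kcliques H (r'+1) = K.card := by
    rw [kcliques]
    have : {t : Finset (Fin n) | H.IsNClique (r'+1) t} = ↑K := by
      ext t; simp [hKdef]
    rw [this, Set.ncard_coe_finset]
  -- π is injective on cliques
  have hinj : ∀ t ∈ K, Set.InjOn π ↑t := by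
    intro t ht v hv w hw heq
    by_contra hne
    have hcl := (Finset.mem_filter.mp ht).2.1
    exact (hAdj v w).mp (hcl hv hw hne) heq
  -- the image of a clique is an (r'+1)-subset of Fin s
  have hmapsto : ∀ t ∈ K, t.image π ∈ (Finset.univ : Finset (Fin s)).powersetCard (r'+1) := by
    intro t ht
    rw [Finset.mem_powersetCard]
    refine ⟨Finset.subset_univ _, ?_⟩
    rw [Finset.card_image_of_injOn (hinj t ht)]
    exact (Finset.mem_filter.mp ht).2.2
  -- selection function
  set sel : Finset (Fin n) → Fin s → Fin n := fun t j =>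
    if h : (t.filter fun v => π v = j).Nonempty then (t.filter fun v => π v = j).min' h
    else ⟨0, hn0⟩ with hseldef
  have hsel_mem : ∀ (t : Finset (Fin n)) (j : Fin s), (t.filter fun v => π v = j).Nonempty →
      sel t j ∈ t ∧ π (sel t j) = j := by
    intro t j hne
    rw [hseldef]; simp only [dif_pos hne]
    have := Finset.min'_mem _ hne
    exact ⟨(Finset.mem_filter.mp this).1, (Finset.mem_filter.mp this).2⟩
  have hsel_eq : ∀ t ∈ K, ∀ v ∈ t, sel t (π v) = v := by
    intro t ht v hv
    have hfeq : t.filter (fun w => π w = π v) = {v} := by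
      ext w
      simp only [Finset.mem_filter, Finset.mem_singleton]
      constructor
      · rintro ⟨hw, hww⟩
        by_contra hne
        have hcl := (Finset.mem_filter.mp ht).2.1
        exact (hAdj w v).mp (hcl hw hv hne) hww
      · rintro rfl; exact ⟨hv, rfl⟩
    rw [hseldef]
    simp only [hfeq]
    rw [dif_pos (Finset.singleton_nonempty v)]
    exact Finset.min'_singleton v
  -- fiber bound
  have hfiber : ∀ T ∈ (Finset.univ : Finset (Fin s)).powersetCard (r'+1),
      (K.filter fun t => t.image π = T).card ≤ ∏ j ∈ T, c j := by
    intro T hT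
    have : ∏ j ∈ T, c j = (T.pi fun j => Finset.univ.filter fun v => π v = j).card := by
      rw [Finset.card_pi]
    rw [this]
    apply Finset.card_le_card_of_injOn (fun t => fun j _ => sel t j)
    · intro t ht
      obtain ⟨htK, htim⟩ := Finset.mem_filter.mp ht
      rw [Finset.mem_coe, Finset.mem_pi]
      intro j hj
      have hne : (t.filter fun v => π v = j).Nonempty := by
        rw [← htim] at hj
        obtain ⟨v, hv, rfl⟩ := Finset.mem_image.mp hj
        exact ⟨v, Finset.mem_filter.mpr ⟨hv, rfl⟩⟩
      obtain ⟨h1, h2⟩ := hsel_mem t j hne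
      exact Finset.mem_filter.mpr ⟨Finset.mem_univ _, h2⟩
    · intro t ht t' ht' hf
      simp only [Finset.mem_coe, Finset.mem_filter] at ht ht'
      have hst : ∀ v ∈ t, v ∈ t' := by
        intro v hv
        have hjT : π v ∈ T := by
          rw [← ht.2]; exact Finset.mem_image_of_mem π hv
        have heq : sel t (π v) = sel t' (π v) := congrFun (congrFun hf (π v)) hjT
        have hne' : (t'.filter fun w => π w = π v).Nonempty := by
          have : π v ∈ t'.image π := by rw [ht'.2]; exact hjT
          obtain ⟨w, hw, hww⟩ := Finset.mem_image.mp this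
          exact ⟨w, Finset.mem_filter.mpr ⟨hw, hww⟩⟩
        have := (hsel_mem t' (π v) hne').1
        rw [← heq, hsel_eq t ht.1 v hv] at this
        exact this
      have hst' : ∀ v ∈ t', v ∈ t := by
        intro v hv
        have hjT : π v ∈ T := by
          rw [← ht'.2]; exact Finset.mem_image_of_mem π hv
        have heq : sel t (π v) = sel t' (π v) := congrFun (congrFun hf (π v)) hjT
        have hne' : (t.filter fun w => π w = π v).Nonempty := by
          have : π v ∈ t.image π := by rw [ht.2]; exact hjT
          obtain ⟨w, hw, hww⟩ := Finset.mem_image.mp this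
          exact ⟨w, Finset.mem_filter.mpr ⟨hw, hww⟩⟩
        have := (hsel_mem t (π v) hne').1
        rw [heq, hsel_eq t' ht'.1 v hv] at this
        exact this
      exact Finset.Subset.antisymm hst hst'
  -- total count bound
  have hcount : K.card ≤ ∑ T ∈ (Finset.univ : Finset (Fin s)).powersetCard (r'+1), ∏ j ∈ T, c j := by
    rw [Finset.card_eq_sum_card_fiberwise hmapsto]
    exact Finset.sum_le_sum hfiber
  -- split the sum at j₀
  set A : Finset (Fin s) := Finset.univ.erase j₀ with hAdef
  have hj₀A : j₀ ∉ A := Finset.notMem_erase j₀ _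
  have huniv : insert j₀ A = Finset.univ := Finset.insert_erase (Finset.mem_univ j₀)
  have hcardA : A.card = s - 1 := by
    rw [hAdef, Finset.card_erase_of_mem (Finset.mem_univ j₀), Finset.card_univ,
      Fintype.card_fin]
  have hTj : ∀ T ∈ A.powersetCard r', j₀ ∉ T := fun T hT hj =>
    hj₀A ((Finset.mem_powersetCard.mp hT).1 hj)
  have hsplit : ∑ T ∈ (Finset.univ : Finset (Fin s)).powersetCard (r'+1), ∏ j ∈ T, c j
      = (∑ T ∈ A.powersetCard (r'+1), ∏ j ∈ T, c j)
        + i * ∑ T ∈ A.powersetCard r', ∏ j ∈ T, c j := by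
    rw [← huniv, Finset.powersetCard_succ_insert hj₀A]
    have hdisj : Disjoint (A.powersetCard (r'+1)) ((A.powersetCard r').image (insert j₀)) := by
      rw [Finset.disjoint_left]
      intro T hT hT'
      obtain ⟨T', hT', rfl⟩ := Finset.mem_image.mp hT'
      exact hj₀A ((Finset.mem_powersetCard.mp hT).1 (Finset.mem_insert_self j₀ T'))
    have hinj2 : Set.InjOn (insert j₀) (A.powersetCard r' : Set (Finset (Fin s))) := by
      intro T hT T' hT' hTT
      have h1 := hTj T (by simpa using hT)
      have h2 := hTj T' (by simpa using hT')
      rw [← Finset.erase_insert h1, ← Finset.erase_insert h2, hTT]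
    rw [Finset.sum_union hdisj, Finset.sum_image hinj2]
    congr 1
    rw [Finset.mul_sum]
    apply Finset.sum_congr rfl
    intro T hT
    rw [Finset.prod_insert (hTj T hT)]
    congr 1
  -- sums of class sizes
  have hsumuniv : ∑ j : Fin s, c j = n := by
    have := Finset.card_eq_sum_card_fiberwise
      (f := π) (s := (Finset.univ : Finset (Fin n))) (t := (Finset.univ : Finset (Fin s)))
      (fun x _ => Finset.mem_univ (π x))
    rw [Finset.card_univ, Fintype.card_fin] at this
    rw [← this]
  have hin : i ≤ n := le_trans hi (Nat.div_le_self n s)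
  have hsumA : ∑ j ∈ A, c j = n - i := by
    have : ∑ j ∈ insert j₀ A, c j = c j₀ + ∑ j ∈ A, c j := Finset.sum_insert hj₀A
    rw [huniv, hsumuniv] at this
    have hcj₀ : c j₀ = i := h0
    omega
  have hs1 : 1 ≤ s := by omega
  -- real versions
  have hsumAR : ∑ j ∈ A, (c j : ℝ) = (n : ℝ) - (i : ℝ) := by
    rw [← Nat.cast_sum]
    rw [hsumA]
    push_cast [hin]
    ring
  have hcardAR : (A.card : ℝ) = (s : ℝ) - 1 := by
    rw [hcardA]
    push_cast [hs1]
    ring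
  -- apply maclaurin
  have hm1 := maclaurin (fun j => (c j : ℝ)) (fun j => Nat.cast_nonneg _) A r'
  have hm2 := maclaurin (fun j => (c j : ℝ)) (fun j => Nat.cast_nonneg _) A (r'+1)
  rw [hsumAR, hcardAR, hcardA] at hm1 hm2
  have hfinal : (kcliques H (r'+1) : ℝ)
      ≤ (∑ T ∈ A.powersetCard (r'+1), ∏ j ∈ T, ((c j : ℝ)))
        + (i : ℝ) * ∑ T ∈ A.powersetCard r', ∏ j ∈ T, ((c j : ℝ)) := by
    rw [hkc]
    have : (K.card : ℝ) ≤
        ((∑ T ∈ A.powersetCard (r'+1), ∏ j ∈ T, c j)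
          + i * ∑ T ∈ A.powersetCard r', ∏ j ∈ T, c j : ℕ) := by
      exact_mod_cast le_trans hcount (le_of_eq hsplit)
    push_cast at this ⊢
    exact this
  have hr'eq : r' + 1 - 1 = r' := by omega
  rw [hr'eq]
  calc (kcliques H (r'+1) : ℝ)
      ≤ (∑ T ∈ A.powersetCard (r'+1), ∏ j ∈ T, ((c j : ℝ)))
        + (i : ℝ) * ∑ T ∈ A.powersetCard r', ∏ j ∈ T, ((c j : ℝ)) := hfinal
    _ ≤ ((s-1).choose (r'+1) : ℝ) * (((n:ℝ) - i) / ((s:ℝ) - 1)) ^ (r'+1)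
        + (i : ℝ) * (((s-1).choose r' : ℝ) * (((n:ℝ) - i) / ((s:ℝ) - 1)) ^ r') := by
        apply add_le_add hm2
        exact mul_le_mul_of_nonneg_left hm1 (Nat.cast_nonneg _)
    _ = ((s - 1).choose r' : ℝ) * (((n : ℝ) - (i : ℝ)) / ((s : ℝ) - 1)) ^ r' * (i : ℝ) +
        ((s - 1).choose (r'+1) : ℝ) * (((n : ℝ) - (i : ℝ)) / ((s : ℝ) - 1)) ^ (r'+1) := by
        ring
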